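/- If μ({ζ ∈ 𝓔 : ε(ζ) = ε⁰}) > 0 (equivalently μ({ε̄ = 0}) > 0), then δ(T) → 0 as T → 0⁺ and D(T) → 0 as T → 0⁺. -/

import Mathlib

open MeasureTheory Real Filter
open Topology Nat

noncomputable section

variable {𝓔 : Type*} [MeasurableSpace 𝓔]

private lemma pow_le_factorial_mul_exp {x : ℝ} (hx : 0 ≤ x) (n : ℕ) :
    x ^ n ≤ (n ! : ℝ) * Real.exp x := by
  have h : x ^ n / (n ! : ℝ) ≤ Real.exp x :=
    le_trans (Finset.single_le_sum (f := fun i => x ^ i / (i ! : ℝ))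
      (fun i _ => by positivity) (Finset.self_mem_range_succ n))
      (Real.sum_le_exp_of_nonneg hx (n + 1))
  have hn : (0:ℝ) < (n ! : ℝ) := by positivity
  calc x ^ n = x ^ n / (n ! : ℝ) * (n ! : ℝ) := by field_simp
    _ ≤ Real.exp x * (n ! : ℝ) := mul_le_mul_of_nonneg_right h hn.le
    _ = (n ! : ℝ) * Real.exp x := mul_comm _ _

private lemma pow_mul_exp_le {b x : ℝ} (hb : 0 < b) (hx : 0 ≤ x) (n : ℕ) :
    x ^ n * Real.exp (-(b * x)) ≤ ((n ! : ℝ) * (2 / b) ^ n) * Real.exp (-(b / 2 * x)) := by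
  have h1 : (b / 2 * x) ^ n ≤ (n ! : ℝ) * Real.exp (b / 2 * x) :=
    pow_le_factorial_mul_exp (by positivity) n
  have h2 : x ^ n ≤ ((n ! : ℝ) * (2 / b) ^ n) * Real.exp (b / 2 * x) := by
    have h3 := mul_le_mul_of_nonneg_left h1 (le_of_lt (pow_pos (by positivity : (0:ℝ) < 2 / b) n))
    calc x ^ n = (2 / b) ^ n * (b / 2 * x) ^ n := by
          rw [← mul_pow]; congr 1; field_simp
      _ ≤ (2 / b) ^ n * ((n ! : ℝ) * Real.exp (b / 2 * x)) := h3
      _ = _ := by ring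
  have harg : b / 2 * x + -(b * x) = -(b / 2 * x) := by ring
  calc x ^ n * Real.exp (-(b * x))
      ≤ ((n ! : ℝ) * (2 / b) ^ n) * Real.exp (b / 2 * x) * Real.exp (-(b * x)) :=
        mul_le_mul_of_nonneg_right h2 (Real.exp_nonneg _)
    _ = ((n ! : ℝ) * (2 / b) ^ n) * Real.exp (-(b / 2 * x)) := by
        rw [mul_assoc, ← Real.exp_add, harg]

private lemma aux_intn (μ : Measure 𝓔) (f : 𝓔 → ℝ) (hfm : Measurable f)
    (hnn : ∀ᵐ ζ ∂μ, 0 ≤ f ζ)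
    (hint : ∀ b : ℝ, 0 < b → Integrable (fun ζ => Real.exp (-(b * f ζ))) μ)
    (n : ℕ) {b : ℝ} (hb : 0 < b) :
    Integrable (fun ζ => f ζ ^ n * Real.exp (-(b * f ζ))) μ := by
  refine Integrable.mono' ((hint (b / 2) (by positivity)).const_mul ((n ! : ℝ) * (2 / b) ^ n))
    ?_ ?_
  · exact ((hfm.pow_const n).mul ((hfm.const_mul b).neg.exp)).aestronglyMeasurable
  · filter_upwards [hnn] with ζ hζ
    rw [Real.norm_eq_abs, abs_of_nonneg (mul_nonneg (pow_nonneg hζ n) (Real.exp_nonneg _))]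
    exact pow_mul_exp_le hb hζ n

private lemma aux_deriv (μ : Measure 𝓔) (f : 𝓔 → ℝ) (hfm : Measurable f)
    (hnn : ∀ᵐ ζ ∂μ, 0 ≤ f ζ)
    (hint : ∀ b : ℝ, 0 < b → Integrable (fun ζ => Real.exp (-(b * f ζ))) μ)
    (n : ℕ) {b : ℝ} (hb : 0 < b) :
    HasDerivAt (fun t => ∫ ζ, f ζ ^ n * Real.exp (-(t * f ζ)) ∂μ)
      (-∫ ζ, f ζ ^ (n + 1) * Real.exp (-(b * f ζ)) ∂μ) b := by
  have key := hasDerivAt_integral_of_dominated_loc_of_deriv_le (μ := μ)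
    (F := fun t ζ => f ζ ^ n * Real.exp (-(t * f ζ)))
    (F' := fun t ζ => -(f ζ ^ (n + 1) * Real.exp (-(t * f ζ))))
    (x₀ := b)
    (bound := fun ζ => (((n + 1)! : ℝ) * (2 / (b / 2)) ^ (n + 1)) * Real.exp (-(b / 2 / 2 * f ζ)))
    (Metric.ball_mem_nhds b (half_pos hb))
    (Eventually.of_forall fun x =>
      ((hfm.pow_const n).mul ((hfm.const_mul x).neg.exp)).aestronglyMeasurable)
    (aux_intn μ f hfm hnn hint n hb)
    (((hfm.pow_const (n + 1)).mul ((hfm.const_mul b).neg.exp)).neg.aestronglyMeasurable)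
    ?_ ((hint (b / 2 / 2) (by positivity)).const_mul _) ?_
  · rw [integral_neg] at key
    exact key.2
  · filter_upwards [hnn] with ζ hζ
    intro x hx
    rw [Metric.mem_ball, Real.dist_eq] at hx
    have hxb : b / 2 ≤ x := by cases abs_lt.mp hx; linarith
    rw [norm_neg, Real.norm_eq_abs,
      abs_of_nonneg (mul_nonneg (pow_nonneg hζ _) (Real.exp_nonneg _))]
    calc f ζ ^ (n + 1) * Real.exp (-(x * f ζ))
        ≤ f ζ ^ (n + 1) * Real.exp (-(b / 2 * f ζ)) := by
          apply mul_le_mul_of_nonneg_left _ (pow_nonneg hζ _)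
          exact Real.exp_le_exp.mpr (by nlinarith)
      _ ≤ _ := pow_mul_exp_le (half_pos hb) hζ (n + 1)
  · filter_upwards [hnn] with ζ hζ
    intro x hx
    have h : HasDerivAt
      (fun t : ℝ => f ζ ^ n * Real.exp (-(t * f ζ)))
      (f ζ ^ n * (Real.exp (-(x * f ζ)) * -(f ζ))) x :=
      (hasDerivAt_mul_const (f ζ)).neg.exp.const_mul (f ζ ^ n)
    refine h.congr_deriv ?_
    rw [pow_succ]; ring

private lemma aux_lim (μ : Measure 𝓔) (f : 𝓔 → ℝ) (hfm : Measurable f)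
    (hnn : ∀ᵐ ζ ∂μ, 0 ≤ f ζ)
    (hint : ∀ b : ℝ, 0 < b → Integrable (fun ζ => Real.exp (-(b * f ζ))) μ)
    (n : ℕ) (hn : n ≠ 0) :
    Tendsto (fun b => b ^ n * ∫ ζ, f ζ ^ n * Real.exp (-(b * f ζ)) ∂μ) atTop (𝓝 0) := by
  have heq : ∀ b : ℝ, b ^ n * ∫ ζ, f ζ ^ n * Real.exp (-(b * f ζ)) ∂μ
      = ∫ ζ, b ^ n * (f ζ ^ n * Real.exp (-(b * f ζ))) ∂μ :=
    fun b => (integral_const_mul _ _).symm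
  have h0 : Tendsto (fun b : ℝ => ∫ ζ, b ^ n * (f ζ ^ n * Real.exp (-(b * f ζ))) ∂μ)
      atTop (𝓝 (∫ _ζ, (0:ℝ) ∂μ)) := by
    apply tendsto_integral_filter_of_dominated_convergence
      (fun ζ => ((n ! : ℝ) * (2 / 1) ^ n) * Real.exp (-(1 / 2 * f ζ)))
    · filter_upwards with b
      exact (((hfm.pow_const n).mul ((hfm.const_mul b).neg.exp)).const_mul _).aestronglyMeasurable
    · filter_upwards [eventually_ge_atTop (1:ℝ)] with b hb
      filter_upwards [hnn] with ζ hζ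
      have hb0 : (0:ℝ) < b := lt_of_lt_of_le one_pos hb
      rw [Real.norm_eq_abs, abs_of_nonneg (by positivity)]
      calc b ^ n * (f ζ ^ n * Real.exp (-(b * f ζ)))
          = (b * f ζ) ^ n * Real.exp (-(1 * (b * f ζ))) := by
            rw [mul_pow, one_mul]; ring
        _ ≤ ((n ! : ℝ) * (2 / 1) ^ n) * Real.exp (-(1 / 2 * (b * f ζ))) :=
            pow_mul_exp_le one_pos (by positivity) n
        _ ≤ ((n ! : ℝ) * (2 / 1) ^ n) * Real.exp (-(1 / 2 * f ζ)) := by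
            apply mul_le_mul_of_nonneg_left _ (by positivity)
            exact Real.exp_le_exp.mpr (by nlinarith)
    · exact (hint (1/2) (by norm_num)).const_mul _
    · filter_upwards [hnn] with ζ hζ
      rcases eq_or_lt_of_le hζ with h0 | h0
      · have : ∀ b : ℝ, b ^ n * (f ζ ^ n * Real.exp (-(b * f ζ))) = 0 := by
          intro b; rw [← h0, zero_pow hn]; ring
        simpa [this] using tendsto_const_nhds (x := (0:ℝ)) (f := atTop)
      · have h1 : Tendsto (fun b : ℝ => b * f ζ) atTop atTop :=
          tendsto_id.atTop_mul_const h0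
        have h2 := (Real.tendsto_pow_mul_exp_neg_atTop_nhds_zero n).comp h1
        apply h2.congr
        intro b
        simp only [Function.comp_apply]
        rw [mul_pow]; ring
  rw [show (0:ℝ) = ∫ _ζ, (0:ℝ) ∂μ by simp]
  exact (tendsto_congr heq).mpr h0

private lemma aux_glim (μ : Measure 𝓔) (f : 𝓔 → ℝ) (hfm : Measurable f)
    (hnn : ∀ᵐ ζ ∂μ, 0 ≤ f ζ)
    (hint : ∀ b : ℝ, 0 < b → Integrable (fun ζ => Real.exp (-(b * f ζ))) μ) :
    Tendsto (fun b => ∫ ζ, Real.exp (-(b * f ζ)) ∂μ) atTop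
      (𝓝 ((μ {ζ | f ζ = 0}).toReal)) := by
  have hms : MeasurableSet {ζ | f ζ = 0} := hfm (measurableSet_singleton 0)
  have h0 : Tendsto (fun b : ℝ => ∫ ζ, Real.exp (-(b * f ζ)) ∂μ) atTop
      (𝓝 (∫ ζ, Set.indicator {ζ | f ζ = 0} (fun _ => (1:ℝ)) ζ ∂μ)) := by
    apply tendsto_integral_filter_of_dominated_convergence
      (fun ζ => Real.exp (-(1 / 2 * f ζ)))
    · filter_upwards with b
      exact ((hfm.const_mul b).neg.exp).aestronglyMeasurable
    · filter_upwards [eventually_ge_atTop (1:ℝ)] with b hb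
      filter_upwards [hnn] with ζ hζ
      rw [Real.norm_eq_abs, abs_of_nonneg (Real.exp_nonneg _)]
      exact Real.exp_le_exp.mpr (by nlinarith)
    · exact hint (1/2) (by norm_num)
    · filter_upwards [hnn] with ζ hζ
      rcases eq_or_lt_of_le hζ with h0 | h0
      · have hmem : ζ ∈ {ζ | f ζ = 0} := h0.symm
        rw [Set.indicator_of_mem hmem]
        simpa [← h0] using tendsto_const_nhds (x := (1:ℝ)) (f := (atTop : Filter ℝ))
      · have hmem : ζ ∉ {ζ | f ζ = 0} := by
          simp only [Set.mem_setOf_eq]; exact ne_of_gt h0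
        rw [Set.indicator_of_notMem hmem]
        have h1 : Tendsto (fun b : ℝ => -(b * f ζ)) atTop atBot :=
          tendsto_neg_atBot_iff.mpr (tendsto_id.atTop_mul_const h0)
        exact Real.tendsto_exp_atBot.comp h1
  have : ∫ ζ, Set.indicator {ζ | f ζ = 0} (fun _ => (1:ℝ)) ζ ∂μ
      = (μ {ζ | f ζ = 0}).toReal := by
    rw [integral_indicator_const (1:ℝ) hms]; simp; rfl
  rwa [this] at h0

private lemma aux_fin (μ : Measure 𝓔) (f : 𝓔 → ℝ) (hfm : Measurable f)
    (hnn : ∀ᵐ ζ ∂μ, 0 ≤ f ζ)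
    (hint : ∀ b : ℝ, 0 < b → Integrable (fun ζ => Real.exp (-(b * f ζ))) μ) :
    μ {ζ | f ζ = 0} < ⊤ := by
  have hms : MeasurableSet {ζ | f ζ = 0} := hfm (measurableSet_singleton 0)
  have hind : Integrable (Set.indicator {ζ | f ζ = 0} (fun _ => (1:ℝ))) μ := by
    refine Integrable.mono' (hint 1 one_pos)
      (aestronglyMeasurable_const.indicator hms) ?_
    filter_upwards [hnn] with ζ hζ
    by_cases hmem : ζ ∈ {ζ | f ζ = 0}
    · rw [Set.indicator_of_mem hmem]
      have : f ζ = 0 := hmem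
      simp [this]
    · rw [Set.indicator_of_notMem hmem]
      simp [Real.exp_nonneg]
  have h2 := (integrable_indicator_iff hms).mp hind
  rcases (integrableOn_const_iff (C := (1:ℝ))).mp h2 with h | h
  · norm_num at h
  · exact h

/-- The (thermodynamic) number of internal degrees of freedom
`δ(T) = (2/(k_B T)) ⬝ (∫ ε̄ e^{-ε̄/(k_B T)} dμ) / (∫ e^{-ε̄/(k_B T)} dμ)`, `ε̄ = ε - ε0`. -/
def deltaFun (μ : Measure 𝓔) (ε : 𝓔 → ℝ) (ε0 : ℝ) (kB T : ℝ) : ℝ :=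
  (2 / (kB * T)) *
    ((∫ ζ, (ε ζ - ε0) * Real.exp (-(ε ζ - ε0) / (kB * T)) ∂μ) /
      (∫ ζ, Real.exp (-(ε ζ - ε0) / (kB * T)) ∂μ))

/-- `D(T) = d(T δ(T))/dT`. -/
def Dfun (μ : Measure 𝓔) (ε : 𝓔 → ℝ) (ε0 : ℝ) (kB T : ℝ) : ℝ :=
  deriv (fun s => s * deltaFun μ ε ε0 kB s) T

set_option maxHeartbeats 1000000 in
/-- **Proposition (behaviour at zero temperature when the ground state is charged).**
If `μ({ε = ε⁰}) > 0` then `δ(T) → 0` and `D(T) → 0` as `T → 0⁺`. -/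
theorem delta_tendsto_zero_of_ground_state
    (μ : Measure 𝓔) (hμ : μ Set.univ ≠ 0)
    (kB : ℝ) (hkB : 0 < kB)
    (ε : 𝓔 → ℝ) (hε : Measurable ε) (ε0 : ℝ)
    (hlow : ∀ᵐ ζ ∂μ, ε0 ≤ ε ζ)
    (hsup : ∀ R : ℝ, (∀ᵐ ζ ∂μ, R ≤ ε ζ) → R ≤ ε0)
    (hZ : ∀ β : ℝ, 0 < β → Integrable (fun ζ => Real.exp (-β * (ε ζ - ε0))) μ)
    (hground : μ {ζ | ε ζ = ε0} ≠ 0) :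
    Tendsto (fun T => deltaFun μ ε ε0 kB T) (nhdsWithin 0 (Set.Ioi 0)) (nhds 0) ∧
    Tendsto (fun T => Dfun μ ε ε0 kB T) (nhdsWithin 0 (Set.Ioi 0)) (nhds 0) := by
  haveI : NeZero μ := ⟨Measure.measure_univ_ne_zero.mp hμ⟩
  have hfm : Measurable (fun ζ => ε ζ - ε0) := hε.sub measurable_const
  have hnn : ∀ᵐ ζ ∂μ, 0 ≤ ε ζ - ε0 := hlow.mono fun ζ hζ => sub_nonneg.mpr hζ
  have hint : ∀ b : ℝ, 0 < b → Integrable (fun ζ => Real.exp (-(b * (ε ζ - ε0)))) μ :=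
    fun b hb => by simpa [neg_mul] using hZ b hb
  have hset : {ζ | ε ζ - ε0 = 0} = {ζ | ε ζ = ε0} := by
    ext ζ; simp [sub_eq_zero]
  set m : ℝ := (μ {ζ | ε ζ = ε0}).toReal with hmdef
  have hm : 0 < m := by
    refine ENNReal.toReal_pos hground ?_
    rw [← hset]
    exact (aux_fin μ _ hfm hnn hint).ne
  set G : ℝ → ℝ := fun b => ∫ ζ, Real.exp (-(b * (ε ζ - ε0))) ∂μ with hGdef
  set H : ℝ → ℝ := fun b => ∫ ζ, (ε ζ - ε0) * Real.exp (-(b * (ε ζ - ε0))) ∂μ with hHdef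
  set K : ℝ → ℝ := fun b => ∫ ζ, (ε ζ - ε0) ^ 2 * Real.exp (-(b * (ε ζ - ε0))) ∂μ with hKdef
  have hGpos : ∀ b : ℝ, 0 < b → 0 < G b := fun b hb => integral_exp_pos (hint b hb)
  have hGlim : Tendsto G atTop (𝓝 m) := by
    rw [hGdef, hmdef, ← hset]
    exact aux_glim μ _ hfm hnn hint
  have hHlim : Tendsto (fun b => b * H b) atTop (𝓝 0) := by
    have := aux_lim μ _ hfm hnn hint 1 one_ne_zero
    rw [hHdef]
    simpa [pow_one] using this
  have hKlim : Tendsto (fun b => b ^ 2 * K b) atTop (𝓝 0) := by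
    rw [hKdef]
    exact aux_lim μ _ hfm hnn hint 2 two_ne_zero
  have hGderiv : ∀ b : ℝ, 0 < b → HasDerivAt G (-(H b)) b := by
    intro b hb
    rw [hGdef, hHdef]
    simpa [pow_zero, pow_one, one_mul] using aux_deriv μ _ hfm hnn hint 0 hb
  have hHderiv : ∀ b : ℝ, 0 < b → HasDerivAt H (-(K b)) b := by
    intro b hb
    rw [hHdef, hKdef]
    simpa [pow_one] using aux_deriv μ _ hfm hnn hint 1 hb
  have htop : Tendsto (fun T : ℝ => (kB * T)⁻¹) (nhdsWithin 0 (Set.Ioi 0)) atTop := by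
    apply tendsto_inv_nhdsGT_zero.comp
    rw [tendsto_nhdsWithin_iff]
    constructor
    · have h1 : Tendsto (fun T : ℝ => kB * T) (𝓝 0) (𝓝 (kB * 0)) :=
        (continuous_const.mul continuous_id).tendsto 0
      simpa using h1.mono_left nhdsWithin_le_nhds
    · filter_upwards [self_mem_nhdsWithin] with T hT
      exact mul_pos hkB hT
  have hδeq : ∀ T ∈ Set.Ioi (0:ℝ),
      deltaFun μ ε ε0 kB T = 2 * ((kB * T)⁻¹ * H ((kB * T)⁻¹)) / G ((kB * T)⁻¹) := by
    intro T hT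
    have hkT : (0:ℝ) < kB * T := mul_pos hkB hT
    unfold deltaFun
    have e1 : ∀ ζ, -(ε ζ - ε0) / (kB * T) = -((kB * T)⁻¹ * (ε ζ - ε0)) := fun ζ => by
      field_simp
    simp only [e1, hGdef, hHdef]
    ring
  clear_value G H K
  constructor
  · have hδtend : Tendsto (fun b => 2 * (b * H b) / G b) atTop (𝓝 0) := by
      have := (hHlim.const_mul 2).div hGlim hm.ne'
      convert this using 2 <;> simp
    apply (hδtend.comp htop).congr'
    filter_upwards [self_mem_nhdsWithin] with T hT
    exact (hδeq T hT).symm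
  · have hψ : Tendsto (fun b => 2 * (b ^ 2 * K b * G b - (b * H b) ^ 2) / (G b) ^ 2)
        atTop (𝓝 0) := by
      have h1 : Tendsto (fun b => 2 * (b ^ 2 * K b * G b - (b * H b) ^ 2)) atTop
          (𝓝 (2 * (0 * m - 0 ^ 2))) := (((hKlim.mul hGlim)).sub (hHlim.pow 2)).const_mul 2
      have h2 : Tendsto (fun b => (G b) ^ 2) atTop (𝓝 (m ^ 2)) := hGlim.pow 2
      have := h1.div h2 (pow_ne_zero 2 hm.ne')
      convert this using 2 <;> simp
    have hDeq : ∀ T ∈ Set.Ioi (0:ℝ),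
        Dfun μ ε ε0 kB T = 2 * (((kB * T)⁻¹) ^ 2 * K ((kB * T)⁻¹) * G ((kB * T)⁻¹)
          - ((kB * T)⁻¹ * H ((kB * T)⁻¹)) ^ 2) / (G ((kB * T)⁻¹)) ^ 2 := by
      intro T hT
      have hT0 : (0:ℝ) < T := hT
      have hkT : (0:ℝ) < kB * T := mul_pos hkB hT0
      have hb : (0:ℝ) < (kB * T)⁻¹ := by positivity
      have hGb : G ((kB * T)⁻¹) ≠ 0 := (hGpos _ hb).ne'
      have hinner : HasDerivAt (fun s : ℝ => (kB * s)⁻¹) (-(kB * 1) / (kB * T) ^ 2) T :=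
        ((hasDerivAt_id T).const_mul kB).inv hkT.ne'
      have hquot : HasDerivAt (fun u => H u / G u)
          ((-(K ((kB * T)⁻¹)) * G ((kB * T)⁻¹) - H ((kB * T)⁻¹) * -(H ((kB * T)⁻¹)))
            / (G ((kB * T)⁻¹)) ^ 2) ((kB * T)⁻¹) :=
        (hHderiv _ hb).div (hGderiv _ hb) hGb
      have hcomp : HasDerivAt (fun s : ℝ => H ((kB * s)⁻¹) / G ((kB * s)⁻¹))
          (((-(K ((kB * T)⁻¹)) * G ((kB * T)⁻¹) - H ((kB * T)⁻¹) * -(H ((kB * T)⁻¹)))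
            / (G ((kB * T)⁻¹)) ^ 2) * (-(kB * 1) / (kB * T) ^ 2)) T :=
        by have := hquot.comp T hinner; exact this
      have hG' := hcomp.const_mul (2 / kB)
      have heq : (fun s : ℝ => s * deltaFun μ ε ε0 kB s)
          =ᶠ[𝓝 T] (fun s => (2 / kB) * (H ((kB * s)⁻¹) / G ((kB * s)⁻¹))) := by
        filter_upwards [isOpen_Ioi.mem_nhds hT0] with s hs
        rw [hδeq s hs]
        have hs0 : (0:ℝ) < s := hs
        have hks : kB * s ≠ 0 := (mul_pos hkB hs0).ne'
        have hGs : G ((kB * s)⁻¹) ≠ 0 := (hGpos _ (by positivity)).ne'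
        rw [← mul_div_assoc, ← mul_div_assoc]
        congr 1
        rw [mul_inv,
          show s * (2 * (kB⁻¹ * s⁻¹ * H (kB⁻¹ * s⁻¹))) = 2 * kB⁻¹ * H (kB⁻¹ * s⁻¹) * (s * s⁻¹) from
            by ring,
          mul_inv_cancel₀ hs0.ne', mul_one, div_eq_mul_inv]
      have hderiv_eq : Dfun μ ε ε0 kB T = (2 / kB) *
          (((-(K ((kB * T)⁻¹)) * G ((kB * T)⁻¹) - H ((kB * T)⁻¹) * -(H ((kB * T)⁻¹)))
            / (G ((kB * T)⁻¹)) ^ 2) * (-(kB * 1) / (kB * T) ^ 2)) := by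
        unfold Dfun
        rw [heq.deriv_eq, hG'.deriv]
      have hsc : 2 / kB * (-(kB * 1) / (kB * T) ^ 2) = -2 * ((kB * T)⁻¹) ^ 2 := by
        field_simp
      rw [hderiv_eq,
        mul_comm ((-(K ((kB * T)⁻¹)) * G ((kB * T)⁻¹) - H ((kB * T)⁻¹) * -(H ((kB * T)⁻¹)))
          / (G ((kB * T)⁻¹)) ^ 2) (-(kB * 1) / (kB * T) ^ 2),
        ← mul_assoc, hsc]
      ring
    apply (hψ.comp htop).congr'
    filter_upwards [self_mem_nhdsWithin] with T hT
    exact (hDeq T hT).symm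

end
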